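/- Define the finite-difference form ∂_M(e_M^m, e_M^n) = 2M(δ_{m,n+1} − δ_{m,n−1}) (indices mod M) on ℂ^M. Under the embedding I^{(2)}_{M→2M} e_M^m = (e_{2M}^{2m} + e_{2M}^{2m+1})/√2, this family is weakly cylindrically consistent: ∂_{2M}(I^{(2)}_{M→2M} e_M^m, I^{(2)}_{M→2M} e_M^n) = ∂_M(e_M^m, e_M^n) for all m,n ∈ {0,…,M−1}. -/
import Mathlib


/-- The orthonormal basis vector e_M^m = √M δ^m of ℂ^M. -/
noncomputable def eVec (M : ℕ) (m : ZMod M) : ZMod M → ℂ :=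
  fun a => if a = m then (Real.sqrt M : ℂ) else 0

/-- The embedding I^{(2)}_{M→2M}, determined on the ONB by
e_M^m ↦ (e_{2M}^{2m} + e_{2M}^{2m+1})/√2; on functions: (I f)(n) = f(⌊n/2⌋). -/
def embed2 (M : ℕ) (f : ZMod M → ℂ) : ZMod (2 * M) → ℂ :=
  fun n => f ((n.val / 2 : ℕ) : ZMod M)

/-- The finite-difference sesquilinear form ∂_N(f,g) = (1/N)∑ₐ conj(f_a)·2N(g_{a+1} − g_{a−1})
on ℂ^N with periodic boundary conditions (indices mod N). -/
noncomputable def dform (N : ℕ) [NeZero N] (f g : ZMod N → ℂ) : ℂ :=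
  (1 / (N : ℂ)) * ∑ a : ZMod N,
    (starRingEnd ℂ) (f a) * (2 * (N : ℂ) * (g (a + 1) - g (a - 1)))

lemma key (M : ℕ) [NeZero M] (j : ℕ) :
    ((((j : ZMod (2*M)).val / 2 : ℕ)) : ZMod M) = ((j / 2 : ℕ) : ZMod M) := by
  haveI : NeZero (2*M) := ⟨mul_ne_zero two_ne_zero (NeZero.ne M)⟩
  rw [ZMod.val_natCast, Nat.mod_mul_right_div_self, ZMod.natCast_mod]

/-- Under the embedding I^{(2)}_{M→2M}, the finite-difference
momentum forms are weakly cylindrically consistent: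
∂_{2M}(I^{(2)}e_M^m, I^{(2)}e_M^n) = ∂_M(e_M^m, e_M^n) for all m, n. -/
theorem stmt15 (M : ℕ) [NeZero M] (L : ℕ) (hM : M = 2 ^ L) (h2 : 2 ≤ M) :
    ∀ m n : ZMod M,
      dform (2 * M) (embed2 M (eVec M m)) (embed2 M (eVec M n)) =
        dform M (eVec M m) (eVec M n) := by
  intro m n
  haveI : NeZero (2*M) := ⟨mul_ne_zero two_ne_zero (NeZero.ne M)⟩
  have hMpos : 0 < M := NeZero.pos M
  have hmv : m.val < M := ZMod.val_lt m
  have geval : ∀ j : ℕ, embed2 M (eVec M n) ((j : ℕ) : ZMod (2*M)) =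
      if ((j/2 : ℕ) : ZMod M) = n then (Real.sqrt M : ℂ) else 0 := by
    intro j; simp [embed2, eVec, ZMod.val_natCast, Nat.mod_mul_right_div_self, ZMod.natCast_mod]
  obtain ⟨c0, hc0⟩ : ∃ c : ZMod (2*M), c = ((2*m.val : ℕ) : ZMod (2*M)) := ⟨_, rfl⟩
  obtain ⟨c1, hc1⟩ : ∃ c : ZMod (2*M), c = ((2*m.val+1 : ℕ) : ZMod (2*M)) := ⟨_, rfl⟩
  have hc01 : c1 = c0 + 1 := by rw [hc0, hc1]; push_cast; ring
  have fdecomp : ∀ b : ZMod (2*M), embed2 M (eVec M m) b =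
      (if b = c0 then (Real.sqrt M:ℂ) else 0) + (if b = c1 then (Real.sqrt M:ℂ) else 0) := by
    intro b
    have hbv : b.val < 2*M := b.val_lt
    have hb : b = ((b.val : ℕ) : ZMod (2*M)) := (ZMod.natCast_rightInverse b).symm
    have hiff : (((b.val/2 : ℕ) : ZMod M) = m) ↔ (b = c0 ∨ b = c1) := by
      constructor
      · intro h
        have h2' : b.val / 2 = m.val := by
          have := congrArg ZMod.val h
          rwa [ZMod.val_cast_of_lt (by omega : b.val / 2 < M)] at this
        have : b.val = 2*m.val ∨ b.val = 2*m.val+1 := by omega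
        rcases this with h' | h'
        · exact Or.inl (by rw [hb, h', ← hc0])
        · exact Or.inr (by rw [hb, h', ← hc1])
      · rintro (rfl | rfl)
        · rw [hc0, ZMod.val_natCast, Nat.mod_eq_of_lt (by omega)]
          have : 2*m.val/2 = m.val := by omega
          rw [this, ZMod.natCast_rightInverse m]
        · rw [hc1, ZMod.val_natCast, Nat.mod_eq_of_lt (by omega)]
          have : (2*m.val+1)/2 = m.val := by omega
          rw [this, ZMod.natCast_rightInverse m]
    have hc0c1 : c0 ≠ c1 := by
      intro h
      have := congrArg ZMod.val h
      rw [hc0, hc1, ZMod.val_natCast, ZMod.val_natCast,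
        Nat.mod_eq_of_lt (by omega), Nat.mod_eq_of_lt (by omega)] at this
      omega
    simp only [embed2, eVec]
    by_cases h0 : b = c0
    · subst h0
      rw [if_pos (hiff.mpr (Or.inl rfl)), if_pos rfl, if_neg hc0c1, add_zero]
    · by_cases h1 : b = c1
      · subst h1
        rw [if_pos (hiff.mpr (Or.inr rfl)), if_neg h0, if_pos rfl, zero_add]
      · rw [if_neg (fun h => by rcases hiff.mp h with h | h <;> tauto), if_neg h0, if_neg h1, add_zero]
  -- the four evaluation points
  have e1 : embed2 M (eVec M n) (c0 + 1) = (if m = n then (Real.sqrt M:ℂ) else 0) := by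
    have : c0 + 1 = ((2*m.val+1 : ℕ) : ZMod (2*M)) := by rw [hc0]; push_cast; ring
    rw [this, geval]
    have : (2*m.val+1)/2 = m.val := by omega
    rw [this, ZMod.natCast_rightInverse m]
  have e2 : embed2 M (eVec M n) (c0 - 1) = (if m - 1 = n then (Real.sqrt M:ℂ) else 0) := by
    have h : c0 - 1 = ((2*m.val + (2*M-1) : ℕ) : ZMod (2*M)) := by
      rw [hc0]
      push_cast [Nat.cast_sub (by omega : 1 ≤ 2*M)]
      have h2M : (2 : ZMod (2*M)) * ((M:ℕ) : ZMod (2*M)) = 0 := by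
        have := ZMod.natCast_self (2*M); push_cast at this; exact this
      linear_combination -h2M
    rw [h, geval]
    have hd : (2*m.val + (2*M-1))/2 = m.val + (M - 1) := by omega
    rw [hd]
    have : ((m.val + (M-1) : ℕ) : ZMod M) = m - 1 := by
      push_cast [Nat.cast_sub (by omega : 1 ≤ M)]
      rw [ZMod.natCast_self, ZMod.natCast_rightInverse m]; ring
    rw [this]
  have e3 : embed2 M (eVec M n) (c1 + 1) = (if m + 1 = n then (Real.sqrt M:ℂ) else 0) := by
    have : c1 + 1 = ((2*m.val+2 : ℕ) : ZMod (2*M)) := by rw [hc1]; push_cast; ring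
    rw [this, geval]
    have : (2*m.val+2)/2 = m.val + 1 := by omega
    rw [this]
    push_cast
    rw [ZMod.natCast_rightInverse m]
  have e4 : embed2 M (eVec M n) (c1 - 1) = (if m = n then (Real.sqrt M:ℂ) else 0) := by
    have h : c1 - 1 = c0 := by rw [hc01]; ring
    rw [h, hc0, geval]
    have : (2*m.val)/2 = m.val := by omega
    rw [this, ZMod.natCast_rightInverse m]
  -- sums
  rw [dform, dform]
  have hsum : ∑ a : ZMod (2*M),
      (starRingEnd ℂ) (embed2 M (eVec M m) a) *
        (2 * ((2*M : ℕ) : ℂ) * (embed2 M (eVec M n) (a + 1) - embed2 M (eVec M n) (a - 1)))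
      = (Real.sqrt M : ℂ) * (2 * ((2*M : ℕ) : ℂ) * (embed2 M (eVec M n) (c0 + 1) - embed2 M (eVec M n) (c0 - 1)))
      + (Real.sqrt M : ℂ) * (2 * ((2*M : ℕ) : ℂ) * (embed2 M (eVec M n) (c1 + 1) - embed2 M (eVec M n) (c1 - 1))) := by
    simp only [fdecomp, map_add, apply_ite (starRingEnd ℂ), map_zero, Complex.conj_ofReal,
      add_mul, ite_mul, zero_mul, Finset.sum_add_distrib, Finset.sum_ite_eq', Finset.mem_univ,
      if_pos]
  rw [hsum, e1, e2, e3, e4]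
  have hsum2 : ∑ a : ZMod M,
      (starRingEnd ℂ) (eVec M m a) * (2 * ((M:ℕ) : ℂ) * (eVec M n (a + 1) - eVec M n (a - 1)))
      = (Real.sqrt M : ℂ) * (2 * ((M:ℕ) : ℂ) * ((if m + 1 = n then (Real.sqrt M:ℂ) else 0) - (if m - 1 = n then (Real.sqrt M:ℂ) else 0))) := by
    simp only [eVec, apply_ite (starRingEnd ℂ), map_zero, Complex.conj_ofReal, ite_mul, zero_mul,
      Finset.sum_ite_eq', Finset.mem_univ, if_pos]
  rw [hsum2]
  have hM0 : ((M:ℕ) : ℂ) ≠ 0 := Nat.cast_ne_zero.mpr (NeZero.ne M)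
  push_cast
  field_simp
  ring
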